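/- Let (X, Σ, μ) be a measure space and f ∈ L^∞(μ). Then f is a topological divisor of zero in L^∞(μ) if and only if there exists a sequence (Eₙ) of measurable subsets of X with μ(Eₙ) > 0 for each n ≥ 1 such that ‖f|_{Eₙ}‖ → 0 as n → ∞, where ‖f|_{Eₙ}‖ denotes the essential supremum of |f| over Eₙ. -/

import Mathlib

open MeasureTheory Filter ENNReal

/-- `f` is a topological divisor of zero in the (commutative) Banach algebra `L^∞(μ)`:
there is a sequence of elements of `L^∞(μ)` of norm one whose products with `f`
tend to zero in norm. -/
def IsTDZLinfty {X : Type*} [MeasurableSpace X] (μ : Measure X) (f : Lp ℂ ⊤ μ) : Prop :=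
  ∃ g : ℕ → Lp ℂ ⊤ μ, (∀ n, ‖g n‖ = 1) ∧
    (Tendsto (fun n => (eLpNorm (⇑f * ⇑(g n) : X → ℂ) ⊤ μ).toReal) atTop (nhds 0) ∨
      Tendsto (fun n => (eLpNorm (⇑(g n) * ⇑f : X → ℂ) ⊤ μ).toReal) atTop (nhds 0))

/-- `f ∈ L^∞(μ)` is a topological divisor of zero if and only if there is a sequence
`(Eₙ)` of measurable sets of positive measure with `‖f|_{Eₙ}‖ → 0`, where `‖f|_{Eₙ}‖`
is the essential supremum of `|f|` over `Eₙ`. -/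
theorem linfty_tdz_iff_exists_sets {X : Type*} [MeasurableSpace X] (μ : Measure X)
    (f : Lp ℂ ⊤ μ) :
    IsTDZLinfty μ f ↔
      ∃ E : ℕ → Set X, (∀ n, MeasurableSet (E n) ∧ 0 < μ (E n)) ∧
        Tendsto (fun n => (eLpNorm (⇑f : X → ℂ) ⊤ (μ.restrict (E n))).toReal)
          atTop (nhds 0) := by
  constructor
  · rintro ⟨g, hg1, hconv⟩
    have hconv' : Tendsto (fun n => (eLpNorm (⇑f * ⇑(g n) : X → ℂ) ⊤ μ).toReal)
        atTop (nhds 0) := by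
      rcases hconv with h | h
      · exact h
      · simpa [mul_comm] using h
    set K : ℕ → ℝ≥0∞ := fun n => eLpNorm (⇑f * ⇑(g n) : X → ℂ) ⊤ μ with hK
    have hKne : ∀ n, K n ≠ ∞ := by
      intro n
      have hle : K n ≤ eLpNorm (⇑f : X → ℂ) ∞ μ * eLpNorm (⇑(g n) : X → ℂ) ∞ μ := by
        have h := eLpNorm_le_eLpNorm_top_mul_eLpNorm ⊤ (⇑f) (Lp.aestronglyMeasurable (g n))
          (fun a b => a * b) 1 (Eventually.of_forall fun x => by simp [nnnorm_mul])
        rwa [ENNReal.coe_one, one_mul] at h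
      exact ne_top_of_le_ne_top
        (ENNReal.mul_ne_top (Lp.memLp f).eLpNorm_ne_top (Lp.memLp (g n)).eLpNorm_ne_top) hle
    set E : ℕ → Set X := fun n => {x | (1 : ℝ) / 2 < ‖(g n : X → ℂ) x‖} with hEdef
    have hEmeas : ∀ n, MeasurableSet (E n) := fun n =>
      measurableSet_lt measurable_const (Lp.stronglyMeasurable (g n)).measurable.norm
    refine ⟨E, fun n => ⟨hEmeas n, ?_⟩, ?_⟩
    · by_contra h
      push_neg at h
      rw [le_zero_iff] at h
      have hae : ∀ᵐ x ∂μ, ‖(g n : X → ℂ) x‖ ≤ 1 / 2 := by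
        rw [ae_iff]
        simpa [hEdef, not_le] using h
      have hle : eLpNorm (⇑(g n) : X → ℂ) ⊤ μ ≤ ENNReal.ofReal (1 / 2) := by
        rw [eLpNorm_exponent_top]
        exact eLpNormEssSup_le_of_ae_bound hae
      have hh : ‖g n‖ ≤ 1 / 2 := by
        rw [Lp.norm_def]
        exact ENNReal.toReal_le_of_le_ofReal (by norm_num) hle
      rw [hg1 n] at hh
      norm_num at hh
    · have hbound : ∀ n, eLpNorm (⇑f : X → ℂ) ⊤ (μ.restrict (E n)) ≤ 2 * K n := by
        intro n
        rw [eLpNorm_exponent_top, eLpNormEssSup]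
        refine essSup_le_of_ae_le _ ?_
        have h1 : ∀ᵐ x ∂μ, (‖(⇑f * ⇑(g n) : X → ℂ) x‖₊ : ℝ≥0∞) ≤ K n := by
          show ∀ᵐ x ∂μ, (‖(⇑f * ⇑(g n) : X → ℂ) x‖₊ : ℝ≥0∞)
            ≤ eLpNorm (⇑f * ⇑(g n) : X → ℂ) ⊤ μ
          rw [eLpNorm_exponent_top]
          exact ae_le_eLpNormEssSup
        filter_upwards [ae_restrict_of_ae h1, ae_restrict_mem (hEmeas n)] with x hx hxE
        have hxE' : (1 : ℝ) / 2 < ‖(g n : X → ℂ) x‖ := hxE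
        have hr : ‖f x‖ ≤ 2 * ‖f x * (g n : X → ℂ) x‖ := by
          rw [norm_mul]
          nlinarith [norm_nonneg (f x), norm_nonneg ((g n : X → ℂ) x)]
        have hnn : ‖f x‖₊ ≤ 2 * ‖f x * (g n : X → ℂ) x‖₊ := by
          rw [← NNReal.coe_le_coe]
          push_cast
          exact hr
        have hfin : (‖f x‖₊ : ℝ≥0∞) ≤ 2 * (‖(⇑f * ⇑(g n) : X → ℂ) x‖₊ : ℝ≥0∞) := by
          have h2 := ENNReal.coe_le_coe.mpr hnn
          simpa [Pi.mul_apply, ENNReal.coe_mul] using h2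
        exact hfin.trans (mul_le_mul_right hx _)
      have h2K : Tendsto (fun n => 2 * (K n).toReal) atTop (nhds 0) := by
        simpa [hK] using hconv'.const_mul (2 : ℝ)
      refine squeeze_zero (fun n => ENNReal.toReal_nonneg) (fun n => ?_) h2K
      have := ENNReal.toReal_mono
        (ENNReal.mul_ne_top (by norm_num) (hKne n)) (hbound n)
      rwa [ENNReal.toReal_mul, ENNReal.toReal_ofNat] at this
  · rintro ⟨E, hE, hconv⟩
    have hmem : ∀ n, MemLp ((E n).indicator fun _ => (1 : ℂ)) ⊤ μ := fun n =>
      memLp_top_of_bound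
        ((stronglyMeasurable_const.indicator (hE n).1).aestronglyMeasurable) 1
        (Eventually.of_forall fun x => by
          by_cases hx : x ∈ E n <;> simp [Set.indicator, hx])
    refine ⟨fun n => (hmem n).toLp _, fun n => ?_, Or.inl ?_⟩
    · rw [Lp.norm_def, eLpNorm_congr_ae (hmem n).coeFn_toLp, eLpNorm_exponent_top,
        eLpNormEssSup_indicator_const_eq _ _ (hE n).2.ne']
      simp
    · have key : ∀ n, eLpNorm (⇑f * ⇑((hmem n).toLp _) : X → ℂ) ⊤ μ
          = eLpNorm (⇑f : X → ℂ) ⊤ (μ.restrict (E n)) := by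
        intro n
        have h1 : (⇑f * ⇑((hmem n).toLp _) : X → ℂ) =ᵐ[μ] (E n).indicator ⇑f := by
          filter_upwards [(hmem n).coeFn_toLp] with x hx
          by_cases hxE : x ∈ E n <;>
            simp [Pi.mul_apply, hx, Set.indicator, hxE]
        rw [eLpNorm_congr_ae h1, eLpNorm_indicator_eq_eLpNorm_restrict (hE n).1]
      have heq : (fun n => (eLpNorm (⇑f * ⇑((hmem n).toLp _) : X → ℂ) ⊤ μ).toReal)
          = fun n => (eLpNorm (⇑f : X → ℂ) ⊤ (μ.restrict (E n))).toReal :=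
        funext fun n => by rw [key n]
      rw [heq]
      exact hconv
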